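/- Let E = {(v, w) ∈ ℝ³ × ℝ³ : ‖v‖ = 1, ‖w‖ = 1, v₁ ≥ |w₁|, v₃ ≥ |w₃|, w₂ ≥ 0}. Then E is contractible, and for any positive masses m₁, m₂, m₃, m₄ the set 𝓜⁺ = {r ∈ [0,∞)⁶ : I(r) = 1 and P(r) = 0} is homeomorphic to E. -/

import Mathlib

/-- The Ptolemy function `P` as a function of
`r = (r₁₂, r₁₃, r₁₄, r₂₃, r₂₄, r₃₄) ∈ ℝ⁶`. -/
def Pvec (r : Fin 6 → ℝ) : ℝ :=
  r 0 * r 5 + r 2 * r 3 - r 1 * r 4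

/-- The moment of inertia `I` as a function of `r ∈ ℝ⁶`. -/
noncomputable def Ivec (m1 m2 m3 m4 : ℝ) (r : Fin 6 → ℝ) : ℝ :=
  (1/(2*(m1 + m2 + m3 + m4))) *
    (m1*m2*(r 0)^2 + m1*m3*(r 1)^2 + m1*m4*(r 2)^2 +
     m2*m3*(r 3)^2 + m2*m4*(r 4)^2 + m3*m4*(r 5)^2)

/-- The set `𝓜⁺ = {r ∈ [0,∞)⁶ : I(r) = 1, P(r) = 0}`. -/
noncomputable def setMplus (m1 m2 m3 m4 : ℝ) : Set (Fin 6 → ℝ) :=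
  {r | (∀ i, 0 ≤ r i) ∧ Ivec m1 m2 m3 m4 r = 1 ∧ Pvec r = 0}

/-- The set `E ⊆ S² × S²` cut out by the inequalities
`v₁ ≥ |w₁|`, `v₃ ≥ |w₃|`, `w₂ ≥ 0`. -/
def setE : Set (EuclideanSpace ℝ (Fin 3) × EuclideanSpace ℝ (Fin 3)) :=
  {p | ‖p.1‖ = 1 ∧ ‖p.2‖ = 1 ∧
    p.1 0 ≥ |p.2 0| ∧ p.1 2 ≥ |p.2 2| ∧ p.2 1 ≥ 0}

noncomputable section Aux

abbrev T3 := EuclideanSpace ℝ (Fin 3)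

lemma norm3 (x : T3) : ‖x‖ = Real.sqrt ((x 0)^2 + (x 1)^2 + (x 2)^2) := by
  rw [EuclideanSpace.norm_eq, Fin.sum_univ_three]
  simp [Real.norm_eq_abs, sq_abs]

lemma norm3_one {x : T3} (h : ‖x‖ = 1) : (x 0)^2 + (x 1)^2 + (x 2)^2 = 1 := by
  rw [norm3, Real.sqrt_eq_one] at h; exact h

/-- squared norm on ℝ⁶ -/
def S6 (r : Fin 6 → ℝ) : ℝ :=
  (r 0)^2 + (r 1)^2 + (r 2)^2 + (r 3)^2 + (r 4)^2 + (r 5)^2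

noncomputable def nrm6 (r : Fin 6 → ℝ) : ℝ := Real.sqrt (S6 r)

noncomputable def PhiFun (r : Fin 6 → ℝ) : T3 × T3 :=
  (WithLp.toLp 2 ![ (r 0 + r 5)/nrm6 r, (r 1 - r 4)/nrm6 r, (r 2 + r 3)/nrm6 r ],
   WithLp.toLp 2 ![ (r 0 - r 5)/nrm6 r, (r 1 + r 4)/nrm6 r, (r 2 - r 3)/nrm6 r ])

def Qm (m1 m2 m3 m4 : ℝ) (u : Fin 6 → ℝ) : ℝ :=
  m1*m2*(u 0)^2 + m1*m3*(u 1)^2 + m1*m4*(u 2)^2 +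
  m2*m3*(u 3)^2 + m2*m4*(u 4)^2 + m3*m4*(u 5)^2

def uOf (p : T3 × T3) : Fin 6 → ℝ :=
  ![ (p.1 0 + p.2 0)/2, (p.2 1 + p.1 1)/2, (p.1 2 + p.2 2)/2,
     (p.1 2 - p.2 2)/2, (p.2 1 - p.1 1)/2, (p.1 0 - p.2 0)/2 ]

noncomputable def dOf (m1 m2 m3 m4 : ℝ) (p : T3 × T3) : ℝ :=
  Real.sqrt (Qm m1 m2 m3 m4 (uOf p) / (2*(m1+m2+m3+m4)))

noncomputable def PsiFun (m1 m2 m3 m4 : ℝ) (p : T3 × T3) : Fin 6 → ℝ :=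
  fun i => uOf p i / dOf m1 m2 m3 m4 p

@[simp] lemma cons_val_five {α : Type*} (a b c d e f : α) : (![a,b,c,d,e,f] : Fin 6 → α) 5 = f := rfl

lemma uOf_0 (p : T3 × T3) : uOf p 0 = (p.1 0 + p.2 0)/2 := rfl
lemma uOf_1 (p : T3 × T3) : uOf p 1 = (p.2 1 + p.1 1)/2 := rfl
lemma uOf_2 (p : T3 × T3) : uOf p 2 = (p.1 2 + p.2 2)/2 := rfl
lemma uOf_3 (p : T3 × T3) : uOf p 3 = (p.1 2 - p.2 2)/2 := rfl
lemma uOf_4 (p : T3 × T3) : uOf p 4 = (p.2 1 - p.1 1)/2 := rfl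
lemma uOf_5 (p : T3 × T3) : uOf p 5 = (p.1 0 - p.2 0)/2 := rfl

variable {m1 m2 m3 m4 : ℝ}

lemma Qr_eq (hm1 : 0 < m1) (hm2 : 0 < m2) (hm3 : 0 < m3) (hm4 : 0 < m4)
    {r : Fin 6 → ℝ} (hI : Ivec m1 m2 m3 m4 r = 1) :
    Qm m1 m2 m3 m4 r = 2*(m1+m2+m3+m4) := by
  have hM : (0:ℝ) < m1 + m2 + m3 + m4 := by linarith
  rw [Ivec] at hI
  rw [Qm]
  field_simp at hI
  linarith [hI]

lemma S6_pos (hm1 : 0 < m1) (hm2 : 0 < m2) (hm3 : 0 < m3) (hm4 : 0 < m4)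
    {r : Fin 6 → ℝ} (hI : Ivec m1 m2 m3 m4 r = 1) : 0 < S6 r := by
  have hQ := Qr_eq hm1 hm2 hm3 hm4 hI
  rw [Qm] at hQ
  rw [S6]
  nlinarith [mul_nonneg (by positivity : (0:ℝ) ≤ m1*m3+m1*m4+m2*m3+m2*m4+m3*m4) (sq_nonneg (r 0)),
    mul_nonneg (by positivity : (0:ℝ) ≤ m1*m2+m1*m4+m2*m3+m2*m4+m3*m4) (sq_nonneg (r 1)),
    mul_nonneg (by positivity : (0:ℝ) ≤ m1*m2+m1*m3+m2*m3+m2*m4+m3*m4) (sq_nonneg (r 2)),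
    mul_nonneg (by positivity : (0:ℝ) ≤ m1*m2+m1*m3+m1*m4+m2*m4+m3*m4) (sq_nonneg (r 3)),
    mul_nonneg (by positivity : (0:ℝ) ≤ m1*m2+m1*m3+m1*m4+m2*m3+m3*m4) (sq_nonneg (r 4)),
    mul_nonneg (by positivity : (0:ℝ) ≤ m1*m2+m1*m3+m1*m4+m2*m3+m2*m4) (sq_nonneg (r 5)),
    mul_pos hm1 hm2, mul_pos hm1 hm3, mul_pos hm1 hm4,
    mul_pos hm2 hm3, mul_pos hm2 hm4, mul_pos hm3 hm4]

lemma Phi_mem (hm1 : 0 < m1) (hm2 : 0 < m2) (hm3 : 0 < m3) (hm4 : 0 < m4)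
    {r : Fin 6 → ℝ} (hr : r ∈ setMplus m1 m2 m3 m4) :
    PhiFun r ∈ setE := by
  obtain ⟨hpos, hI, hP⟩ := hr
  have hS : 0 < S6 r := S6_pos hm1 hm2 hm3 hm4 hI
  have hn : 0 < nrm6 r := Real.sqrt_pos.mpr hS
  have hn2 : (nrm6 r)^2 = S6 r := Real.sq_sqrt hS.le
  have hne : nrm6 r ≠ 0 := hn.ne'
  rw [Pvec] at hP
  rw [S6] at hn2
  set n := nrm6 r with hndef
  have h0 := hpos 0; have h1 := hpos 1; have h2 := hpos 2
  have h3 := hpos 3; have h4 := hpos 4; have h5 := hpos 5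
  refine ⟨?_, ?_, ?_, ?_, ?_⟩
  · rw [norm3, Real.sqrt_eq_one]
    show ((r 0 + r 5)/n)^2 + ((r 1 - r 4)/n)^2 + ((r 2 + r 3)/n)^2 = 1
    field_simp
    linear_combination 2*hP - hn2
  · rw [norm3, Real.sqrt_eq_one]
    show ((r 0 - r 5)/n)^2 + ((r 1 + r 4)/n)^2 + ((r 2 - r 3)/n)^2 = 1
    field_simp
    linear_combination -2*hP - hn2
  · show (r 0 + r 5)/n ≥ |(r 0 - r 5)/n|
    rw [abs_div, abs_of_pos hn, ge_iff_le, div_le_div_iff_of_pos_right hn, abs_le]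
    constructor <;> linarith
  · show (r 2 + r 3)/n ≥ |(r 2 - r 3)/n|
    rw [abs_div, abs_of_pos hn, ge_iff_le, div_le_div_iff_of_pos_right hn, abs_le]
    constructor <;> linarith
  · show (r 1 + r 4)/n ≥ 0
    positivity

lemma setE_facts {p : T3 × T3} (hp : p ∈ setE) :
    (p.1 0)^2 + (p.1 1)^2 + (p.1 2)^2 = 1 ∧
    (p.2 0)^2 + (p.2 1)^2 + (p.2 2)^2 = 1 ∧
    |p.2 0| ≤ p.1 0 ∧ |p.2 2| ≤ p.1 2 ∧ |p.1 1| ≤ p.2 1 := by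
  obtain ⟨hv, hw, h1, h2, h3⟩ := hp
  have hv' := norm3_one hv
  have hw' := norm3_one hw
  refine ⟨hv', hw', h1, h2, ?_⟩
  -- derive |v1| ≤ w1
  have hv0 : (p.2 0)^2 ≤ (p.1 0)^2 := by
    have := abs_nonneg (p.2 0)
    nlinarith [sq_abs (p.2 0)]
  have hv2 : (p.2 2)^2 ≤ (p.1 2)^2 := by
    have := abs_nonneg (p.2 2)
    nlinarith [sq_abs (p.2 2)]
  have hsq : (p.1 1)^2 ≤ (p.2 1)^2 := by linarith
  have := abs_nonneg (p.1 1)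
  nlinarith [sq_abs (p.1 1), abs_nonneg (p.1 1), sq_abs (p.2 1)]

lemma uOf_nonneg {p : T3 × T3} (hp : p ∈ setE) : ∀ i, 0 ≤ uOf p i := by
  obtain ⟨hv, hw, h1, h2, h5⟩ := setE_facts hp
  have h3 := hp.2.2.2.2
  have e0 := abs_le.mp h1
  have e2 := abs_le.mp h2
  have e1 := abs_le.mp h5
  intro i
  fin_cases i <;> simp [uOf] <;> linarith

lemma uOf_sum {p : T3 × T3} (hp : p ∈ setE) : S6 (uOf p) = 1 := by
  obtain ⟨hv, hw, -, -, -⟩ := setE_facts hp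
  simp only [S6, uOf_0, uOf_1, uOf_2, uOf_3, uOf_4, uOf_5]
  linear_combination hv/2 + hw/2

lemma uOf_P {p : T3 × T3} (hp : p ∈ setE) :
    uOf p 0 * uOf p 5 + uOf p 2 * uOf p 3 - uOf p 1 * uOf p 4 = 0 := by
  obtain ⟨hv, hw, -, -, -⟩ := setE_facts hp
  simp only [uOf_0, uOf_1, uOf_2, uOf_3, uOf_4, uOf_5]
  linear_combination hv/4 - hw/4

lemma Qu_pos' {c : ℝ} (hcpos : 0 < c)
    (h0 : c ≤ m1*m2) (h1 : c ≤ m1*m3) (h2 : c ≤ m1*m4)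
    (h3 : c ≤ m2*m3) (h4 : c ≤ m2*m4) (h5 : c ≤ m3*m4)
    {u : Fin 6 → ℝ} (hs : S6 u = 1) : 0 < Qm m1 m2 m3 m4 u := by
  rw [S6] at hs
  rw [Qm]
  nlinarith [mul_nonneg (sub_nonneg.mpr h0) (sq_nonneg (u 0)),
    mul_nonneg (sub_nonneg.mpr h1) (sq_nonneg (u 1)),
    mul_nonneg (sub_nonneg.mpr h2) (sq_nonneg (u 2)),
    mul_nonneg (sub_nonneg.mpr h3) (sq_nonneg (u 3)),
    mul_nonneg (sub_nonneg.mpr h4) (sq_nonneg (u 4)),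
    mul_nonneg (sub_nonneg.mpr h5) (sq_nonneg (u 5))]

lemma Qu_pos (hm1 : 0 < m1) (hm2 : 0 < m2) (hm3 : 0 < m3) (hm4 : 0 < m4)
    {u : Fin 6 → ℝ} (hs : S6 u = 1) : 0 < Qm m1 m2 m3 m4 u := by
  refine Qu_pos' (c := min (m1*m2) (min (m1*m3) (min (m1*m4) (min (m2*m3) (min (m2*m4) (m3*m4))))))
    (by positivity) ?_ ?_ ?_ ?_ ?_ ?_ hs <;> simp [min_le_iff]

lemma dOf_pos (hm1 : 0 < m1) (hm2 : 0 < m2) (hm3 : 0 < m3) (hm4 : 0 < m4)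
    {p : T3 × T3} (hp : p ∈ setE) : 0 < dOf m1 m2 m3 m4 p := by
  have hQ := Qu_pos hm1 hm2 hm3 hm4 (uOf_sum hp)
  have hM : (0:ℝ) < 2*(m1+m2+m3+m4) := by linarith
  exact Real.sqrt_pos.mpr (by positivity)

lemma Psi_mem (hm1 : 0 < m1) (hm2 : 0 < m2) (hm3 : 0 < m3) (hm4 : 0 < m4)
    {p : T3 × T3} (hp : p ∈ setE) :
    PsiFun m1 m2 m3 m4 p ∈ setMplus m1 m2 m3 m4 := by
  have hQ := Qu_pos hm1 hm2 hm3 hm4 (uOf_sum hp)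
  have hM : (0:ℝ) < m1+m2+m3+m4 := by linarith
  have hd : 0 < dOf m1 m2 m3 m4 p := dOf_pos hm1 hm2 hm3 hm4 hp
  have hdne : dOf m1 m2 m3 m4 p ≠ 0 := hd.ne'
  have hd2 : (dOf m1 m2 m3 m4 p)^2 = Qm m1 m2 m3 m4 (uOf p) / (2*(m1+m2+m3+m4)) :=
    Real.sq_sqrt (by positivity)
  refine ⟨fun i => div_nonneg (uOf_nonneg hp i) hd.le, ?_, ?_⟩
  · rw [Ivec]
    show (1/(2*(m1 + m2 + m3 + m4))) *
      (m1*m2*(uOf p 0 / dOf m1 m2 m3 m4 p)^2 + m1*m3*(uOf p 1 / dOf m1 m2 m3 m4 p)^2 +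
       m1*m4*(uOf p 2 / dOf m1 m2 m3 m4 p)^2 + m2*m3*(uOf p 3 / dOf m1 m2 m3 m4 p)^2 +
       m2*m4*(uOf p 4 / dOf m1 m2 m3 m4 p)^2 + m3*m4*(uOf p 5 / dOf m1 m2 m3 m4 p)^2) = 1
    have expand : m1*m2*(uOf p 0 / dOf m1 m2 m3 m4 p)^2 + m1*m3*(uOf p 1 / dOf m1 m2 m3 m4 p)^2 +
       m1*m4*(uOf p 2 / dOf m1 m2 m3 m4 p)^2 + m2*m3*(uOf p 3 / dOf m1 m2 m3 m4 p)^2 +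
       m2*m4*(uOf p 4 / dOf m1 m2 m3 m4 p)^2 + m3*m4*(uOf p 5 / dOf m1 m2 m3 m4 p)^2
        = Qm m1 m2 m3 m4 (uOf p) / (dOf m1 m2 m3 m4 p)^2 := by
      rw [Qm]; field_simp
    rw [expand, hd2]
    field_simp
  · rw [Pvec]
    show (uOf p 0 / dOf m1 m2 m3 m4 p) * (uOf p 5 / dOf m1 m2 m3 m4 p) +
      (uOf p 2 / dOf m1 m2 m3 m4 p) * (uOf p 3 / dOf m1 m2 m3 m4 p) -
      (uOf p 1 / dOf m1 m2 m3 m4 p) * (uOf p 4 / dOf m1 m2 m3 m4 p) = 0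
    have hPu := uOf_P hp
    have expand : (uOf p 0 / dOf m1 m2 m3 m4 p) * (uOf p 5 / dOf m1 m2 m3 m4 p) +
      (uOf p 2 / dOf m1 m2 m3 m4 p) * (uOf p 3 / dOf m1 m2 m3 m4 p) -
      (uOf p 1 / dOf m1 m2 m3 m4 p) * (uOf p 4 / dOf m1 m2 m3 m4 p)
        = (uOf p 0 * uOf p 5 + uOf p 2 * uOf p 3 - uOf p 1 * uOf p 4) / (dOf m1 m2 m3 m4 p)^2 := by
      rw [div_mul_div_comm, div_mul_div_comm, div_mul_div_comm]
      simp only [← pow_two]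
      rw [← add_div, div_sub_div_same]
    rw [expand, hPu, zero_div]

lemma left_inv_MP (hm1 : 0 < m1) (hm2 : 0 < m2) (hm3 : 0 < m3) (hm4 : 0 < m4)
    {r : Fin 6 → ℝ} (hr : r ∈ setMplus m1 m2 m3 m4) :
    PsiFun m1 m2 m3 m4 (PhiFun r) = r := by
  obtain ⟨hpos, hI, hP⟩ := hr
  have hM : (0:ℝ) < m1+m2+m3+m4 := by linarith
  have hS : 0 < S6 r := S6_pos hm1 hm2 hm3 hm4 hI
  have hn : 0 < nrm6 r := Real.sqrt_pos.mpr hS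
  have hne : nrm6 r ≠ 0 := hn.ne'
  have hu : ∀ i, uOf (PhiFun r) i = r i / nrm6 r := by
    intro i; fin_cases i <;> simp [uOf, PhiFun] <;> ring
  have hQu : Qm m1 m2 m3 m4 (uOf (PhiFun r)) = Qm m1 m2 m3 m4 r / (nrm6 r)^2 := by
    simp only [Qm, hu]; ring
  have hQr : Qm m1 m2 m3 m4 r = 2*(m1+m2+m3+m4) := Qr_eq hm1 hm2 hm3 hm4 hI
  have harg : Qm m1 m2 m3 m4 (uOf (PhiFun r)) / (2*(m1+m2+m3+m4)) = (1/nrm6 r)^2 := by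
    rw [hQu, hQr]; field_simp
  have hdeq : dOf m1 m2 m3 m4 (PhiFun r) = 1/nrm6 r := by
    rw [dOf, harg, Real.sqrt_sq (by positivity)]
  funext i
  rw [PsiFun] at *
  show uOf (PhiFun r) i / dOf m1 m2 m3 m4 (PhiFun r) = r i
  rw [hu i, hdeq]
  field_simp

lemma right_inv_MP (hm1 : 0 < m1) (hm2 : 0 < m2) (hm3 : 0 < m3) (hm4 : 0 < m4)
    {p : T3 × T3} (hp : p ∈ setE) :
    PhiFun (PsiFun m1 m2 m3 m4 p) = p := by
  have hM : (0:ℝ) < m1+m2+m3+m4 := by linarith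
  have hd : 0 < dOf m1 m2 m3 m4 p := dOf_pos hm1 hm2 hm3 hm4 hp
  have hdne : dOf m1 m2 m3 m4 p ≠ 0 := hd.ne'
  have hS6 : S6 (PsiFun m1 m2 m3 m4 p) = (1/dOf m1 m2 m3 m4 p)^2 := by
    have h1 : S6 (PsiFun m1 m2 m3 m4 p) = S6 (uOf p) / (dOf m1 m2 m3 m4 p)^2 := by
      simp only [S6, PsiFun]; ring
    rw [h1, uOf_sum hp]; field_simp
  have hnrm : nrm6 (PsiFun m1 m2 m3 m4 p) = 1/dOf m1 m2 m3 m4 p := by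
    rw [nrm6, hS6, Real.sqrt_sq (by positivity)]
  apply Prod.ext <;> ext i <;> fin_cases i <;>
    simp [PhiFun, PsiFun, uOf, hnrm] <;> field_simp <;> ring

lemma cont3 {X : Type*} [TopologicalSpace X] {f g h : X → ℝ}
    (hf : Continuous f) (hg : Continuous g) (hh : Continuous h) :
    Continuous (fun x => (WithLp.toLp 2 ![f x, g x, h x] : T3)) := by
  refine ((EuclideanSpace.equiv (Fin 3) ℝ).symm.continuous).comp ?_ |>.congr (fun x => rfl)
  exact continuous_pi fun i => by fin_cases i <;> simpa

lemma cont_Phi (hm1 : 0 < m1) (hm2 : 0 < m2) (hm3 : 0 < m3) (hm4 : 0 < m4) :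
    Continuous (fun x : ↥(setMplus m1 m2 m3 m4) => PhiFun (x : Fin 6 → ℝ)) := by
  have hval : Continuous (fun x : ↥(setMplus m1 m2 m3 m4) => (x : Fin 6 → ℝ)) :=
    continuous_subtype_val
  have happ : ∀ i, Continuous (fun x : ↥(setMplus m1 m2 m3 m4) => (x : Fin 6 → ℝ) i) :=
    fun i => (continuous_apply i).comp hval
  have hS6c : Continuous (fun x : ↥(setMplus m1 m2 m3 m4) => S6 (x : Fin 6 → ℝ)) := by
    unfold S6
    exact ((((((happ 0).pow 2).add ((happ 1).pow 2)).add ((happ 2).pow 2)).add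
      ((happ 3).pow 2)).add ((happ 4).pow 2)).add ((happ 5).pow 2)
  have hnc : Continuous (fun x : ↥(setMplus m1 m2 m3 m4) => nrm6 (x : Fin 6 → ℝ)) := by
    unfold nrm6; exact Real.continuous_sqrt.comp hS6c
  have hden : ∀ x : ↥(setMplus m1 m2 m3 m4), nrm6 (x : Fin 6 → ℝ) ≠ 0 :=
    fun x => (Real.sqrt_pos.mpr (S6_pos hm1 hm2 hm3 hm4 x.2.2.1)).ne'
  unfold PhiFun
  exact Continuous.prodMk
    (cont3 (((happ 0).add (happ 5)).div hnc hden)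
           (((happ 1).sub (happ 4)).div hnc hden)
           (((happ 2).add (happ 3)).div hnc hden))
    (cont3 (((happ 0).sub (happ 5)).div hnc hden)
           (((happ 1).add (happ 4)).div hnc hden)
           (((happ 2).sub (happ 3)).div hnc hden))

lemma cont_Psi (hm1 : 0 < m1) (hm2 : 0 < m2) (hm3 : 0 < m3) (hm4 : 0 < m4) :
    Continuous (fun p : ↥setE => PsiFun m1 m2 m3 m4 (p : T3 × T3)) := by
  have hval : Continuous (fun p : ↥setE => (p : T3 × T3)) := continuous_subtype_val
  have huc : ∀ i, Continuous (fun p : ↥setE => uOf (p : T3 × T3) i) := by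
    intro i
    fin_cases i <;> simp [uOf] <;> fun_prop
  have hQc : Continuous (fun p : ↥setE => Qm m1 m2 m3 m4 (uOf (p : T3 × T3))) := by
    unfold Qm
    exact ((((((continuous_const.mul ((huc 0).pow 2)).add
      (continuous_const.mul ((huc 1).pow 2))).add
      (continuous_const.mul ((huc 2).pow 2))).add
      (continuous_const.mul ((huc 3).pow 2))).add
      (continuous_const.mul ((huc 4).pow 2))).add
      (continuous_const.mul ((huc 5).pow 2)))
  have hdc : Continuous (fun p : ↥setE => dOf m1 m2 m3 m4 (p : T3 × T3)) := by
    unfold dOf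
    exact Real.continuous_sqrt.comp (hQc.div continuous_const fun _ => by positivity)
  have hdne : ∀ p : ↥setE, dOf m1 m2 m3 m4 (p : T3 × T3) ≠ 0 :=
    fun p => (dOf_pos hm1 hm2 hm3 hm4 p.2).ne'
  unfold PsiFun
  exact continuous_pi fun i => (huc i).div hdc hdne

/-! ### Contractibility of `setE` -/

def e1v : T3 := WithLp.toLp 2 ![1, 0, 0]
def e2v : T3 := WithLp.toLp 2 ![0, 1, 0]

lemma e1v_norm : ‖e1v‖ = 1 := by rw [norm3]; show Real.sqrt (1^2+0^2+0^2) = 1; norm_num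
lemma e2v_norm : ‖e2v‖ = 1 := by rw [norm3]; show Real.sqrt (0^2+1^2+0^2) = 1; norm_num

lemma pt_mem : ((e1v, e2v) : T3 × T3) ∈ setE := by
  refine ⟨e1v_norm, e2v_norm, ?_, ?_, ?_⟩ <;>
    show (_ : ℝ) ≥ _ <;> simp [e1v, e2v]

lemma smul_add_apply (c d : ℝ) (a b : T3) (i : Fin 3) :
    (c • a + d • b) i = c * a i + d * b i := rfl

lemma stage1_norm_pos {t : ℝ} (ht0 : 0 ≤ t) (ht1 : t ≤ 1) {p : T3 × T3} (hp : p ∈ setE) :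
    0 < ((1-t) • p.2 + t • e2v) 0 ^ 2 + ((1-t) • p.2 + t • e2v) 1 ^ 2 +
        ((1-t) • p.2 + t • e2v) 2 ^ 2 := by
  obtain ⟨hv, hw, h1, h2, h3⟩ := hp
  have hwsum := norm3_one hw
  simp only [smul_add_apply]
  have e0 : e2v 0 = 0 := rfl
  have e1 : e2v 1 = 1 := rfl
  have e2 : e2v 2 = 0 := rfl
  rw [e0, e1, e2]
  nlinarith [sq_nonneg ((1-t) * p.2 0), sq_nonneg ((1-t) * p.2 2), sq_nonneg (1 - 2*t),
    mul_nonneg (mul_nonneg ht0 (by linarith : (0:ℝ) ≤ 1-t)) h3]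

lemma stage1_mem {t : ℝ} (ht0 : 0 ≤ t) (ht1 : t ≤ 1) {p : T3 × T3} (hp : p ∈ setE) :
    (p.1, ‖(1-t) • p.2 + t • e2v‖⁻¹ • ((1-t) • p.2 + t • e2v)) ∈ setE := by
  obtain ⟨hv, hw, h1, h2, h3⟩ := hp
  have hwsum := norm3_one hw
  have hpos := stage1_norm_pos ht0 ht1 ⟨hv, hw, h1, h2, h3⟩
  set g : T3 := (1-t) • p.2 + t • e2v with hgdef
  have hg0 : g 0 = (1-t) * p.2 0 := by
    rw [hgdef, smul_add_apply]; show _ = _ ; norm_num [e2v]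
  have hg1 : g 1 = (1-t) * p.2 1 + t := by
    rw [hgdef, smul_add_apply]; show _ = _ ; norm_num [e2v]
  have hg2 : g 2 = (1-t) * p.2 2 := by
    rw [hgdef, smul_add_apply]; show _ = _ ; norm_num [e2v, Matrix.cons_val_two]
  have hgn : ‖g‖ = Real.sqrt (g 0 ^2 + g 1 ^2 + g 2 ^2) := norm3 g
  have hn : 0 < ‖g‖ := by rw [hgn]; exact Real.sqrt_pos.mpr hpos
  have hnge : 1 - t ≤ ‖g‖ := by
    rw [hgn, ← Real.sqrt_sq (by linarith : (0:ℝ) ≤ 1 - t)]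
    apply Real.sqrt_le_sqrt
    rw [hg0, hg1, hg2]
    nlinarith [sq_nonneg ((1-t) * p.2 0), sq_nonneg ((1-t) * p.2 2),
      mul_nonneg (mul_nonneg ht0 (by linarith : (0:ℝ) ≤ 1-t)) h3, sq_nonneg t]
  have hfac : ‖g‖⁻¹ * (1 - t) ≤ 1 := by
    rw [inv_mul_le_iff₀ hn, mul_one]; exact hnge
  have hinv : (0:ℝ) ≤ ‖g‖⁻¹ := inv_nonneg.mpr hn.le
  refine ⟨hv, ?_, ?_, ?_, ?_⟩
  · rw [norm_smul, norm_inv, norm_norm, inv_mul_cancel₀ hn.ne']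
  · show p.1 0 ≥ |(‖g‖⁻¹ • g) 0|
    have happ : (‖g‖⁻¹ • g) 0 = ‖g‖⁻¹ * g 0 := rfl
    rw [happ, hg0, abs_mul, abs_mul, abs_of_nonneg hinv,
      abs_of_nonneg (by linarith : (0:ℝ) ≤ 1-t)]
    have h0 : (0:ℝ) ≤ |p.2 0| := abs_nonneg _
    nlinarith [h1]
  · show p.1 2 ≥ |(‖g‖⁻¹ • g) 2|
    have happ : (‖g‖⁻¹ • g) 2 = ‖g‖⁻¹ * g 2 := rfl
    rw [happ, hg2, abs_mul, abs_mul, abs_of_nonneg hinv,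
      abs_of_nonneg (by linarith : (0:ℝ) ≤ 1-t)]
    have h0 : (0:ℝ) ≤ |p.2 2| := abs_nonneg _
    nlinarith [h2]
  · show (‖g‖⁻¹ • g) 1 ≥ 0
    have happ : (‖g‖⁻¹ • g) 1 = ‖g‖⁻¹ * g 1 := rfl
    rw [happ, hg1]
    have : (0:ℝ) ≤ (1-t) * p.2 1 + t :=
      add_nonneg (mul_nonneg (by linarith) h3) ht0
    positivity

lemma stage2_norm_pos {t : ℝ} (ht0 : 0 ≤ t) (ht1 : t ≤ 1) {p : T3 × T3} (hp : p ∈ setE) :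
    0 < ((1-t) • p.1 + t • e1v) 0 ^ 2 + ((1-t) • p.1 + t • e1v) 1 ^ 2 +
        ((1-t) • p.1 + t • e1v) 2 ^ 2 := by
  obtain ⟨hv, hw, h1, h2, h3⟩ := hp
  have hvsum := norm3_one hv
  have hv0 : 0 ≤ p.1 0 := le_trans (abs_nonneg _) h1
  simp only [smul_add_apply]
  have e0 : e1v 0 = 1 := rfl
  have e1 : e1v 1 = 0 := rfl
  have e2 : e1v 2 = 0 := rfl
  rw [e0, e1, e2]
  nlinarith [sq_nonneg ((1-t) * p.1 1), sq_nonneg ((1-t) * p.1 2), sq_nonneg (1 - 2*t),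
    mul_nonneg (mul_nonneg ht0 (by linarith : (0:ℝ) ≤ 1-t)) hv0]

lemma stage2_mem {t : ℝ} (ht0 : 0 ≤ t) (ht1 : t ≤ 1) {p : T3 × T3} (hp : p ∈ setE) :
    (‖(1-t) • p.1 + t • e1v‖⁻¹ • ((1-t) • p.1 + t • e1v), e2v) ∈ setE := by
  obtain ⟨hv, hw, h1, h2, h3⟩ := hp
  have hpos := stage2_norm_pos ht0 ht1 ⟨hv, hw, h1, h2, h3⟩
  have hv0 : 0 ≤ p.1 0 := le_trans (abs_nonneg _) h1
  have hv2 : 0 ≤ p.1 2 := le_trans (abs_nonneg _) h2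
  set g : T3 := (1-t) • p.1 + t • e1v with hgdef
  have hg0 : g 0 = (1-t) * p.1 0 + t := by
    rw [hgdef, smul_add_apply]; show _ = _ ; norm_num [e1v]
  have hg1 : g 1 = (1-t) * p.1 1 := by
    rw [hgdef, smul_add_apply]; show _ = _ ; norm_num [e1v]
  have hg2 : g 2 = (1-t) * p.1 2 := by
    rw [hgdef, smul_add_apply]; show _ = _ ; norm_num [e1v, Matrix.cons_val_two]
  have hgn : ‖g‖ = Real.sqrt (g 0 ^2 + g 1 ^2 + g 2 ^2) := norm3 g
  have hn : 0 < ‖g‖ := by rw [hgn]; exact Real.sqrt_pos.mpr hpos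
  have hinv : (0:ℝ) ≤ ‖g‖⁻¹ := inv_nonneg.mpr hn.le
  refine ⟨?_, e2v_norm, ?_, ?_, ?_⟩
  · rw [norm_smul, norm_inv, norm_norm, inv_mul_cancel₀ hn.ne']
  · show (‖g‖⁻¹ • g) 0 ≥ |e2v 0|
    have happ : (‖g‖⁻¹ • g) 0 = ‖g‖⁻¹ * g 0 := rfl
    have he : |e2v 0| = 0 := by norm_num [e2v]
    rw [happ, hg0, he]
    have : (0:ℝ) ≤ (1-t) * p.1 0 + t :=
      add_nonneg (mul_nonneg (by linarith) hv0) ht0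
    positivity
  · show (‖g‖⁻¹ • g) 2 ≥ |e2v 2|
    have happ : (‖g‖⁻¹ • g) 2 = ‖g‖⁻¹ * g 2 := rfl
    have he : |e2v 2| = 0 := by norm_num [e2v, Matrix.cons_val_two]
    rw [happ, hg2, he]
    have : (0:ℝ) ≤ (1-t) * p.1 2 := mul_nonneg (by linarith) hv2
    positivity
  · show e2v 1 ≥ 0
    norm_num [e2v]

lemma stage1_nn {t : ℝ} (ht0 : 0 ≤ t) (ht1 : t ≤ 1) {p : T3 × T3} (hp : p ∈ setE) :
    ‖(1-t) • p.2 + t • e2v‖ ≠ 0 := by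
  rw [norm3]
  exact (Real.sqrt_pos.mpr (stage1_norm_pos ht0 ht1 hp)).ne'

lemma stage2_nn {t : ℝ} (ht0 : 0 ≤ t) (ht1 : t ≤ 1) {p : T3 × T3} (hp : p ∈ setE) :
    ‖(1-t) • p.1 + t • e1v‖ ≠ 0 := by
  rw [norm3]
  exact (Real.sqrt_pos.mpr (stage2_norm_pos ht0 ht1 hp)).ne'

lemma fmid_mem {p : T3 × T3} (hp : p ∈ setE) : ((p.1, e2v) : T3 × T3) ∈ setE := by
  refine ⟨hp.1, e2v_norm, ?_, ?_, ?_⟩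
  · show p.1 0 ≥ |e2v 0|
    have : |e2v 0| = 0 := by norm_num [e2v]
    rw [this]; exact le_trans (abs_nonneg _) hp.2.2.1
  · show p.1 2 ≥ |e2v 2|
    have : |e2v 2| = 0 := by norm_num [e2v, Matrix.cons_val_two]
    rw [this]; exact le_trans (abs_nonneg _) hp.2.2.2.1
  · show e2v 1 ≥ 0
    norm_num [e2v]

noncomputable def fmid : C(↥setE, ↥setE) :=
  ⟨fun p => ⟨(p.val.1, e2v), fmid_mem p.2⟩,
   Continuous.subtype_mk ((continuous_fst.comp continuous_subtype_val).prodMk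
     continuous_const) _⟩

noncomputable def ptE : ↥setE := ⟨(e1v, e2v), pt_mem⟩

noncomputable def htpy1 : (ContinuousMap.id ↥setE).Homotopy fmid where
  toFun := fun q =>
    ⟨(q.2.val.1,
      ‖(1-(q.1:ℝ)) • q.2.val.2 + (q.1:ℝ) • e2v‖⁻¹ •
        ((1-(q.1:ℝ)) • q.2.val.2 + (q.1:ℝ) • e2v)),
     stage1_mem q.1.2.1 q.1.2.2 q.2.2⟩
  continuous_toFun := by
    have ht : Continuous (fun q : ↥unitInterval × ↥setE => (q.1 : ℝ)) :=
      continuous_subtype_val.comp continuous_fst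
    have hw : Continuous (fun q : ↥unitInterval × ↥setE => q.2.val.2) :=
      continuous_snd.comp (continuous_subtype_val.comp continuous_snd)
    have hGc : Continuous (fun q : ↥unitInterval × ↥setE =>
        ((1-(q.1:ℝ)) • q.2.val.2 + (q.1:ℝ) • e2v : T3)) :=
      ((continuous_const.sub ht).smul hw).add (ht.smul continuous_const)
    have hne : ∀ q : ↥unitInterval × ↥setE,
        ‖(1-(q.1:ℝ)) • q.2.val.2 + (q.1:ℝ) • e2v‖ ≠ 0 :=
      fun q => stage1_nn q.1.2.1 q.1.2.2 q.2.2
    exact Continuous.subtype_mk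
      ((continuous_fst.comp (continuous_subtype_val.comp continuous_snd)).prodMk
        (((hGc.norm).inv₀ hne).smul hGc)) _
  map_zero_left := by
    intro x
    apply Subtype.ext
    apply Prod.ext
    · rfl
    · show ‖(1-((0:unitInterval):ℝ)) • x.val.2 + ((0:unitInterval):ℝ) • e2v‖⁻¹ •
        ((1-((0:unitInterval):ℝ)) • x.val.2 + ((0:unitInterval):ℝ) • e2v) = x.val.2
      have hw1 : ‖x.val.2‖ = 1 := x.2.2.1
      norm_num [hw1]
  map_one_left := by
    intro x
    apply Subtype.ext
    apply Prod.ext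
    · rfl
    · show ‖(1-((1:unitInterval):ℝ)) • x.val.2 + ((1:unitInterval):ℝ) • e2v‖⁻¹ •
        ((1-((1:unitInterval):ℝ)) • x.val.2 + ((1:unitInterval):ℝ) • e2v) = e2v
      norm_num [e2v_norm]

noncomputable def htpy2 : fmid.Homotopy (ContinuousMap.const ↥setE ptE) where
  toFun := fun q =>
    ⟨(‖(1-(q.1:ℝ)) • q.2.val.1 + (q.1:ℝ) • e1v‖⁻¹ •
        ((1-(q.1:ℝ)) • q.2.val.1 + (q.1:ℝ) • e1v), e2v),
     stage2_mem q.1.2.1 q.1.2.2 q.2.2⟩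
  continuous_toFun := by
    have ht : Continuous (fun q : ↥unitInterval × ↥setE => (q.1 : ℝ)) :=
      continuous_subtype_val.comp continuous_fst
    have hv : Continuous (fun q : ↥unitInterval × ↥setE => q.2.val.1) :=
      continuous_fst.comp (continuous_subtype_val.comp continuous_snd)
    have hGc : Continuous (fun q : ↥unitInterval × ↥setE =>
        ((1-(q.1:ℝ)) • q.2.val.1 + (q.1:ℝ) • e1v : T3)) :=
      ((continuous_const.sub ht).smul hv).add (ht.smul continuous_const)
    have hne : ∀ q : ↥unitInterval × ↥setE,
        ‖(1-(q.1:ℝ)) • q.2.val.1 + (q.1:ℝ) • e1v‖ ≠ 0 :=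
      fun q => stage2_nn q.1.2.1 q.1.2.2 q.2.2
    exact Continuous.subtype_mk
      ((((hGc.norm).inv₀ hne).smul hGc).prodMk continuous_const) _
  map_zero_left := by
    intro x
    apply Subtype.ext
    apply Prod.ext
    · show ‖(1-((0:unitInterval):ℝ)) • x.val.1 + ((0:unitInterval):ℝ) • e1v‖⁻¹ •
        ((1-((0:unitInterval):ℝ)) • x.val.1 + ((0:unitInterval):ℝ) • e1v) = x.val.1
      have hv1 : ‖x.val.1‖ = 1 := x.2.1
      norm_num [hv1]
    · rfl
  map_one_left := by
    intro x
    apply Subtype.ext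
    apply Prod.ext
    · show ‖(1-((1:unitInterval):ℝ)) • x.val.1 + ((1:unitInterval):ℝ) • e1v‖⁻¹ •
        ((1-((1:unitInterval):ℝ)) • x.val.1 + ((1:unitInterval):ℝ) • e1v) = e1v
      norm_num [e1v_norm]
    · rfl

lemma setE_contractible : ContractibleSpace ↥setE := by
  rw [contractible_iff_id_nullhomotopic]
  exact ⟨ptE, ⟨htpy1.trans htpy2⟩⟩

end Aux

/-- `E` is contractible, and for positive masses `𝓜⁺` is homeomorphic to `E`. -/
theorem setE_contractible_and_setMplus_homeomorph_setE
    (m1 m2 m3 m4 : ℝ)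
    (hm1 : 0 < m1) (hm2 : 0 < m2) (hm3 : 0 < m3) (hm4 : 0 < m4) :
    ContractibleSpace ↥setE ∧
      Nonempty (↥(setMplus m1 m2 m3 m4) ≃ₜ ↥setE) := by
  refine ⟨setE_contractible, ⟨?_⟩⟩
  exact
    { toFun := fun x => ⟨PhiFun (x : Fin 6 → ℝ), Phi_mem hm1 hm2 hm3 hm4 x.2⟩
      invFun := fun p => ⟨PsiFun m1 m2 m3 m4 (p : T3 × T3), Psi_mem hm1 hm2 hm3 hm4 p.2⟩
      left_inv := fun x => Subtype.ext (left_inv_MP hm1 hm2 hm3 hm4 x.2)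
      right_inv := fun p => Subtype.ext (right_inv_MP hm1 hm2 hm3 hm4 p.2)
      continuous_toFun := Continuous.subtype_mk (cont_Phi hm1 hm2 hm3 hm4) _
      continuous_invFun := Continuous.subtype_mk (cont_Psi hm1 hm2 hm3 hm4) _ }
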